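/- Decomposition of the CME into the MAP-VAE estimator plus error terms: with T(z) = C(z)(C(z) + ς²I)⁻¹, Γ = C(μ_φ) + ς²I, Ψ = C(z) − C(μ_φ), ψ = f₁(z) − f₁(μ_φ), one has E_z[f₁(z) + T(z)(y − f₁(z))] = f₁(μ_φ) + Γ⁻¹C(μ_φ)(y − f₁(μ_φ)) + E_z[(I − Γ⁻¹C(μ_φ))ψ] + E_z[Γ⁻¹Ψ(I − (Γ+Ψ)⁻¹C(z))(y − f₁(z))]. -/

import Mathlib

open Matrix ComplexOrder MeasureTheory

/-- Decomposition of the CME into the MAP-VAE estimator plus error terms: with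
`T(z) = C(z)(C(z) + ς²I)⁻¹`, `Γ = C(μ_φ) + ς²I`, `Ψ(z) = C(z) − C(μ_φ)`,
`ψ(z) = f₁(z) − f₁(μ_φ)`, one has
`E_z[f₁(z) + T(z)(y − f₁(z))] = f₁(μ_φ) + Γ⁻¹C(μ_φ)(y − f₁(μ_φ))
  + E_z[(I − Γ⁻¹C(μ_φ))ψ] + E_z[Γ⁻¹Ψ(I − (Γ+Ψ)⁻¹C(z))(y − f₁(z))]`. -/
theorem cme_map_vae_decomposition {N NL : ℕ}
    (ρ : Measure (Fin NL → ℝ)) [IsProbabilityMeasure ρ]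
    (f1 : (Fin NL → ℝ) → (Fin N → ℂ))
    (C : (Fin NL → ℝ) → Matrix (Fin N) (Fin N) ℂ)
    (hC : ∀ v, (C v).PosSemidef)
    (ς2 : ℝ) (hς2 : 0 < ς2) (μφ : Fin NL → ℝ) (y : Fin N → ℂ)
    (T : (Fin NL → ℝ) → Matrix (Fin N) (Fin N) ℂ)
    (hT : T = fun v => C v * (C v + (ς2 : ℂ) • (1 : Matrix (Fin N) (Fin N) ℂ))⁻¹)
    (Γ : Matrix (Fin N) (Fin N) ℂ)
    (hΓ : Γ = C μφ + (ς2 : ℂ) • (1 : Matrix (Fin N) (Fin N) ℂ))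
    (Ψ : (Fin NL → ℝ) → Matrix (Fin N) (Fin N) ℂ) (hΨ : Ψ = fun v => C v - C μφ)
    (ψ : (Fin NL → ℝ) → (Fin N → ℂ)) (hψ : ψ = fun v => f1 v - f1 μφ)
    (hint1 : Integrable (fun v => f1 v + (T v) *ᵥ (y - f1 v)) ρ)
    (hint2 : Integrable (fun v => ((1 : Matrix (Fin N) (Fin N) ℂ) - Γ⁻¹ * C μφ) *ᵥ ψ v) ρ)
    (hint3 : Integrable (fun v =>
      (Γ⁻¹ * Ψ v * ((1 : Matrix (Fin N) (Fin N) ℂ) - (Γ + Ψ v)⁻¹ * C v)) *ᵥ (y - f1 v)) ρ) :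
    ∫ v, (f1 v + (T v) *ᵥ (y - f1 v)) ∂ρ
      = (f1 μφ + (Γ⁻¹ * C μφ) *ᵥ (y - f1 μφ))
        + ∫ v, ((1 : Matrix (Fin N) (Fin N) ℂ) - Γ⁻¹ * C μφ) *ᵥ ψ v ∂ρ
        + ∫ v, (Γ⁻¹ * Ψ v * ((1 : Matrix (Fin N) (Fin N) ℂ) - (Γ + Ψ v)⁻¹ * C v))
            *ᵥ (y - f1 v) ∂ρ := by
  set s1 : Matrix (Fin N) (Fin N) ℂ := (ς2 : ℂ) • (1 : Matrix (Fin N) (Fin N) ℂ) with hs1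
  -- positive definiteness
  have hs1PD : s1.PosDef := by
    rw [hs1, smul_one_eq_diagonal]
    exact Matrix.PosDef.diagonal fun _ => by exact_mod_cast hς2
  have hSPD : ∀ v, (C v + s1).PosDef := fun v => Matrix.PosDef.posSemidef_add (hC v) hs1PD
  have hΓPD : Γ.PosDef := hΓ ▸ hSPD μφ
  have hΓdet : IsUnit Γ.det := hΓPD.det_pos.ne'.isUnit
  have hGP : ∀ v, Γ + Ψ v = C v + s1 := by
    intro v; rw [hΓ, hΨ]
    show C μφ + s1 + (C v - C μφ) = C v + s1
    rw [add_comm (C μφ) s1, add_assoc, add_sub_cancel, add_comm]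
  -- key matrix identity
  have key : ∀ v, T v = Γ⁻¹ * C μφ +
      Γ⁻¹ * Ψ v * ((1 : Matrix (Fin N) (Fin N) ℂ) - (Γ + Ψ v)⁻¹ * C v) := by
    intro v
    have hSdet : IsUnit (C v + s1).det := (hSPD v).det_pos.ne'.isUnit
    have hScancel : (C v + s1) * (C v + s1)⁻¹ = 1 := mul_nonsing_inv _ hSdet
    have hScancel' : (C v + s1)⁻¹ * (C v + s1) = 1 := nonsing_inv_mul _ hSdet
    have hcomm : C v * (C v + s1)⁻¹ = (C v + s1)⁻¹ * C v := by
      have h1 : C v * (C v + s1) = (C v + s1) * C v := by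
        simp [mul_add, add_mul, hs1, Matrix.mul_smul, Matrix.smul_mul]
      calc C v * (C v + s1)⁻¹
          = ((C v + s1)⁻¹ * (C v + s1)) * (C v * (C v + s1)⁻¹) := by
            rw [hScancel', one_mul]
        _ = (C v + s1)⁻¹ * ((C v + s1) * C v) * (C v + s1)⁻¹ := by
            simp only [mul_assoc]
        _ = (C v + s1)⁻¹ * (C v * (C v + s1)) * (C v + s1)⁻¹ := by rw [h1]
        _ = (C v + s1)⁻¹ * C v * ((C v + s1) * (C v + s1)⁻¹) := by
            simp only [mul_assoc]
        _ = (C v + s1)⁻¹ * C v := by rw [hScancel, mul_one]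
    have main : Γ * (T v) = Γ * (Γ⁻¹ * C μφ +
        Γ⁻¹ * Ψ v * ((1 : Matrix (Fin N) (Fin N) ℂ) - (Γ + Ψ v)⁻¹ * C v)) := by
      rw [hGP v]
      have hR : Γ * (Γ⁻¹ * C μφ +
          Γ⁻¹ * Ψ v * ((1 : Matrix (Fin N) (Fin N) ℂ) - (C v + s1)⁻¹ * C v))
          = C μφ + Ψ v * ((1 : Matrix (Fin N) (Fin N) ℂ) - (C v + s1)⁻¹ * C v) := by
        rw [mul_add]
        simp only [← mul_assoc, mul_nonsing_inv _ hΓdet, one_mul]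
      rw [hR, hT]
      simp only [hcomm]
      rw [hΨ, hΓ]
      set X := (C v + s1)⁻¹ * C v with hX
      have hfin : (C v + s1) * X = C v := by
        rw [hX, ← mul_assoc, hScancel, one_mul]
      have expand : (C μφ + s1) * X = (C v + s1) * X - (C v - C μφ) * X := by
        simp only [add_mul, sub_mul]; abel
      rw [expand, hfin]
      simp only [mul_sub, mul_one]
      abel
    calc T v = Γ⁻¹ * (Γ * T v) := by
          rw [← mul_assoc, nonsing_inv_mul _ hΓdet, one_mul]
      _ = Γ⁻¹ * (Γ * (Γ⁻¹ * C μφ +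
            Γ⁻¹ * Ψ v * ((1 : Matrix (Fin N) (Fin N) ℂ) - (Γ + Ψ v)⁻¹ * C v))) := by
          rw [main]
      _ = _ := by rw [← mul_assoc, nonsing_inv_mul _ hΓdet, one_mul]
  -- pointwise identity
  have pointwise : ∀ v, f1 v + (T v) *ᵥ (y - f1 v)
      = (f1 μφ + (Γ⁻¹ * C μφ) *ᵥ (y - f1 μφ))
        + ((1 : Matrix (Fin N) (Fin N) ℂ) - Γ⁻¹ * C μφ) *ᵥ ψ v
        + (Γ⁻¹ * Ψ v * ((1 : Matrix (Fin N) (Fin N) ℂ) - (Γ + Ψ v)⁻¹ * C v))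
            *ᵥ (y - f1 v) := by
    intro v
    rw [key v, add_mulVec, hψ]
    simp only [sub_mulVec, one_mulVec, mulVec_sub]
    abel
  calc ∫ v, (f1 v + (T v) *ᵥ (y - f1 v)) ∂ρ
      = ∫ v, ((f1 μφ + (Γ⁻¹ * C μφ) *ᵥ (y - f1 μφ))
          + (((1 : Matrix (Fin N) (Fin N) ℂ) - Γ⁻¹ * C μφ) *ᵥ ψ v
          + (Γ⁻¹ * Ψ v * ((1 : Matrix (Fin N) (Fin N) ℂ) - (Γ + Ψ v)⁻¹ * C v))
              *ᵥ (y - f1 v))) ∂ρ := by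
        refine integral_congr_ae (Filter.Eventually.of_forall fun v => ?_)
        dsimp only
        rw [pointwise v, add_assoc]
    _ = (f1 μφ + (Γ⁻¹ * C μφ) *ᵥ (y - f1 μφ))
        + ∫ v, (((1 : Matrix (Fin N) (Fin N) ℂ) - Γ⁻¹ * C μφ) *ᵥ ψ v
          + (Γ⁻¹ * Ψ v * ((1 : Matrix (Fin N) (Fin N) ℂ) - (Γ + Ψ v)⁻¹ * C v))
              *ᵥ (y - f1 v)) ∂ρ := by
        have h23 : Integrable (fun v => ((1 : Matrix (Fin N) (Fin N) ℂ) - Γ⁻¹ * C μφ) *ᵥ ψ v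
            + (Γ⁻¹ * Ψ v * ((1 : Matrix (Fin N) (Fin N) ℂ) - (Γ + Ψ v)⁻¹ * C v))
              *ᵥ (y - f1 v)) ρ := hint2.add hint3
        rw [integral_add (integrable_const _) h23, integral_const,
          probReal_univ, one_smul]
    _ = _ := by rw [integral_add hint2 hint3]; abel
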